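/- arXiv:1802.07828 — 2 statements merged into one kernel-verified Lean document; each statement's English description precedes it below -/
import Mathlib

section
/- Let x_1, …, x_N be i.i.d. random variables taking values in {1, …, l} with P(x_s = i) = p_i for all s, and let N_i be the empirical count of outcome i. Let p_max = max_i p_i and p_secmax = max over i of p_i excluding one index attaining the maximum (the second largest value of the p_i). If the maximum is attained at a unique index i* and p_max − p_secmax > 2·sqrt(2·log(4l/δ)/N) for some δ > 0, then with probability at least 1 − δ, the index attaining the maximal empirical count N_i is equal to i*, i.e. argmax_i N_i = argmax_i p_i. -/
open MeasureTheory ProbabilityTheory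

lemma exp_le_one_add_add_sq' {x : ℝ} (hx : |x| ≤ 1) : Real.exp x ≤ 1 + x + x ^ 2 := by
  have h := Real.exp_bound hx (n := 2) (by norm_num)
  have h2 : ∑ m ∈ Finset.range 2, x ^ m / m.factorial = 1 + x := by
    simp [Finset.sum_range_succ]
  rw [h2] at h
  have h3 := (abs_sub_le_iff.1 h).1
  norm_num [Nat.factorial] at h3
  nlinarith [sq_abs x, sq_nonneg x]

set_option maxHeartbeats 2000000 in
/-- Theorem 1 of the paper: for i.i.d. samples `x 1, …, x N` from a multinomial
distribution on `{1, …, l}` with probabilities `p i` and empirical counts `N_i`,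
if the maximum of `p` is attained at a unique index `istar` and the gap between
the largest probability and the second largest probability exceeds
`2·sqrt(2·log(4l/δ)/N)`, then with probability at least `1 − δ` the index
attaining the maximal empirical count is `istar`. -/
theorem empirical_argmax_eq_true_argmax
    {Ω : Type*} [MeasureSpace Ω] [IsProbabilityMeasure (ℙ : Measure Ω)]
    (l N : ℕ) (hl : 0 < l) (hN : 0 < N)
    (p : Fin l → ℝ) (hp0 : ∀ i, 0 ≤ p i) (hpsum : ∑ i, p i = 1)
    (x : Fin N → Ω → Fin l) (hmeas : ∀ s, Measurable (x s))
    (hindep : iIndepFun x ℙ)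
    (hdist : ∀ s i, ℙ {ω | x s ω = i} = ENNReal.ofReal (p i))
    (δ : ℝ) (hδ : 0 < δ)
    (istar : Fin l) (hstar : ∀ j, j ≠ istar → p j < p istar)
    (hne : (Finset.univ.erase istar).Nonempty)
    (hgap : p istar - (Finset.univ.erase istar).sup' hne p >
      2 * Real.sqrt (2 * Real.log (4 * l / δ) / N)) :
    ENNReal.ofReal (1 - δ) ≤
      ℙ {ω | ∀ j : Fin l, j ≠ istar →
        ((Finset.univ.filter fun s : Fin N => x s ω = j).card : ℝ) <
          ((Finset.univ.filter fun s : Fin N => x s ω = istar).card : ℝ)} := by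
  rcases le_or_gt 1 δ with h1 | h1
  · rw [ENNReal.ofReal_eq_zero.mpr (by linarith)]
    exact zero_le
  -- basic facts
  have hl1 : (1 : ℝ) ≤ (l : ℝ) := by exact_mod_cast hl
  have hN1 : (1 : ℝ) ≤ (N : ℝ) := by exact_mod_cast hN
  have hNpos : (0:ℝ) < N := by linarith
  set L : ℝ := Real.log (4 * l / δ) with hLdef
  have hratpos : (0 : ℝ) < 4 * l / δ := by positivity
  have hLpos : 0 < L := Real.log_pos (by rw [lt_div_iff₀ hδ]; nlinarith)
  set Δ : ℝ := p istar - (Finset.univ.erase istar).sup' hne p with hΔdef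
  have hsqnn : (0:ℝ) ≤ 2 * Real.sqrt (2 * L / N) := by positivity
  have hΔpos : 0 < Δ := lt_of_le_of_lt hsqnn hgap
  have hsup0 : 0 ≤ (Finset.univ.erase istar).sup' hne p := by
    obtain ⟨j0, hj0⟩ := hne
    exact le_trans (hp0 j0) (Finset.le_sup' p hj0)
  have hpile : p istar ≤ 1 := by
    rw [← hpsum]
    exact Finset.single_le_sum (fun i _ => hp0 i) (Finset.mem_univ istar)
  have hΔ1 : Δ ≤ 1 := by simp only [hΔdef]; linarith
  clear_value L Δ
  have hNΔ : 8 * L < N * Δ ^ 2 := by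
    have hs := Real.sq_sqrt (div_nonneg (by linarith) hNpos.le : (0:ℝ) ≤ 2 * L / N)
    have h2 : (2 * Real.sqrt (2 * L / N)) ^ 2 < Δ ^ 2 :=
      pow_lt_pow_left₀ hgap hsqnn (by norm_num)
    rw [mul_pow, hs, show (2:ℝ)^2 * (2 * L / N) = 8 * L / N by ring,
      div_lt_iff₀ hNpos] at h2
    nlinarith
  -- the count functions
  set c : Fin l → Ω → ℝ :=
    fun i ω => ((Finset.univ.filter fun s : Fin N => x s ω = i).card : ℝ) with hc
  have hcmeas : ∀ i, Measurable (c i) := by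
    intro i
    have : c i = fun ω => ∑ s : Fin N, (fun v : Fin l => if v = i then (1:ℝ) else 0) (x s ω) := by
      funext ω
      simp [hc, Finset.sum_boole]
    rw [this]
    exact Finset.measurable_sum _ fun s _ =>
      (Measurable.of_discrete (f := fun v : Fin l => if v = i then (1:ℝ) else 0)).comp (hmeas s)
  set t : ℝ := Δ / 2 with htdef
  have ht0 : 0 ≤ t := by simp only [htdef]; linarith
  have ht1 : t ≤ 1 / 2 := by simp only [htdef]; linarith
  clear_value t
  -- key per-index bound
  have key : ∀ j ∈ Finset.univ.erase istar,
      ℙ {ω | (0:ℝ) ≤ c j ω - c istar ω} ≤ ENNReal.ofReal (Real.exp (-(N * Δ ^ 2) / 4)) := by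
    intro j hj
    have hjne : j ≠ istar := Finset.ne_of_mem_erase hj
    set f : Fin l → ℝ := fun i => (if i = j then (1:ℝ) else 0) - (if i = istar then 1 else 0)
      with hf
    have hfmeas : Measurable f := Measurable.of_discrete
    have hfabs : ∀ i, |f i| ≤ 1 := by
      intro i
      simp only [hf]
      split_ifs <;> norm_num
    set Z : Fin N → Ω → ℝ := fun s => f ∘ x s with hZ
    have hZmeas : ∀ s, Measurable (Z s) := fun s => hfmeas.comp (hmeas s)
    have hZindep : iIndepFun Z ℙ :=
      hindep.comp (fun _ => f) (fun _ => hfmeas)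
    set S : Ω → ℝ := ∑ s : Fin N, Z s with hS
    have hSapp : ∀ ω, S ω = c j ω - c istar ω := by
      intro ω
      simp only [hS, hZ, Finset.sum_apply, Function.comp_apply, hf, hc]
      rw [Finset.sum_sub_distrib]
      simp [Finset.sum_boole]
    have hSfun : S = fun ω => ∑ s : Fin N, Z s ω := by
      funext ω; simp [hS, Finset.sum_apply]
    have hSmeas : Measurable S := by
      rw [hSfun]; exact Finset.measurable_sum _ fun s _ => hZmeas s
    have hSabs : ∀ ω, |S ω| ≤ N := by
      intro ω
      calc |S ω| ≤ ∑ s : Fin N, |Z s ω| := by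
            rw [hS]; simpa [Finset.sum_apply] using
              Finset.abs_sum_le_sum_abs (fun s => Z s ω) Finset.univ
        _ ≤ ∑ _s : Fin N, (1:ℝ) := Finset.sum_le_sum fun s _ => hfabs _
        _ = N := by simp
    have hint : Integrable (fun ω => Real.exp (t * S ω)) ℙ := by
      refine Integrable.mono' (integrable_const (Real.exp (t * N)))
        ((hSmeas.const_mul t).exp.aestronglyMeasurable) (ae_of_all _ fun ω => ?_)
      rw [Real.norm_eq_abs, Real.abs_exp, Real.exp_le_exp]
      calc t * S ω ≤ |t * S ω| := le_abs_self _
        _ = t * |S ω| := by rw [abs_mul, abs_of_nonneg ht0]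
        _ ≤ t * N := by exact mul_le_mul_of_nonneg_left (hSabs ω) ht0
    -- mgf of one summand
    have hmgfZ : ∀ s : Fin N, mgf (Z s) ℙ t ≤ Real.exp (-(Δ ^ 2) / 4) := by
      intro s
      haveI : IsProbabilityMeasure (Measure.map (x s) ℙ) :=
        Measure.isProbabilityMeasure_map (hmeas s).aemeasurable
      have hcalc : mgf (Z s) ℙ t = ∑ i : Fin l, p i * Real.exp (t * f i) := by
        have hrw : mgf (Z s) ℙ t = ∫ i, Real.exp (t * f i) ∂(Measure.map (x s) ℙ) :=
          (integral_map (hmeas s).aemeasurable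
            (Measurable.of_discrete (f := fun i => Real.exp (t * f i))).aestronglyMeasurable).symm
        rw [hrw, integral_fintype Integrable.of_finite]
        refine Finset.sum_congr rfl fun i _ => ?_
        rw [Measure.real_def, Measure.map_apply (hmeas s) (measurableSet_singleton i)]
        have hpre : (x s) ⁻¹' {i} = {ω | x s ω = i} := by ext ω; simp
        rw [hpre, hdist s i, ENNReal.toReal_ofReal (hp0 i), smul_eq_mul]
      rw [hcalc]
      have hstep : ∑ i : Fin l, p i * Real.exp (t * f i) ≤
          ∑ i : Fin l, p i * (1 + t * f i + t ^ 2) := by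
        refine Finset.sum_le_sum fun i _ => ?_
        refine mul_le_mul_of_nonneg_left ?_ (hp0 i)
        have habs : |t * f i| ≤ 1 := by
          rw [abs_mul, abs_of_nonneg ht0]
          calc t * |f i| ≤ t * 1 := mul_le_mul_of_nonneg_left (hfabs i) ht0
            _ ≤ 1 := by linarith
        calc Real.exp (t * f i) ≤ 1 + t * f i + (t * f i) ^ 2 := exp_le_one_add_add_sq' habs
          _ ≤ 1 + t * f i + t ^ 2 := by
            have h4 : f i ^ 2 ≤ 1 := by nlinarith [sq_abs (f i), hfabs i, abs_nonneg (f i)]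
            have : (t * f i) ^ 2 ≤ t ^ 2 := by rw [mul_pow]; nlinarith [sq_nonneg t]
            linarith
      have hval : ∑ i : Fin l, p i * (1 + t * f i + t ^ 2) = 1 + t * (p j - p istar) + t ^ 2 := by
        have e1 : ∑ i : Fin l, p i * (1 + t * f i + t ^ 2)
            = (∑ i : Fin l, p i) * (1 + t ^ 2) + t * ∑ i : Fin l, p i * f i := by
          rw [Finset.sum_mul, Finset.mul_sum, ← Finset.sum_add_distrib]
          exact Finset.sum_congr rfl fun i _ => by ring
        have e2 : ∑ i : Fin l, p i * f i = p j - p istar := by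
          simp only [hf, mul_sub, mul_ite, mul_one, mul_zero]
          rw [Finset.sum_sub_distrib]
          rw [Finset.sum_ite_eq' Finset.univ j p, Finset.sum_ite_eq' Finset.univ istar p]
          simp
        rw [e1, e2, hpsum]
        ring
      have hpj : p j ≤ (Finset.univ.erase istar).sup' hne p := Finset.le_sup' p hj
      calc ∑ i : Fin l, p i * Real.exp (t * f i)
          ≤ 1 + t * (p j - p istar) + t ^ 2 := by rw [← hval]; exact hstep
        _ ≤ 1 + (-(Δ ^ 2) / 4) := by
            have : p j - p istar ≤ -Δ := by simp only [hΔdef]; linarith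
            have h2 : t * (p j - p istar) ≤ t * (-Δ) := mul_le_mul_of_nonneg_left this ht0
            simp only [htdef] at h2 ⊢
            nlinarith
        _ ≤ Real.exp (-(Δ ^ 2) / 4) := by
            have := Real.add_one_le_exp (-(Δ ^ 2) / 4)
            linarith
    -- Chernoff
    have hchern := measure_ge_le_exp_mul_mgf (μ := ℙ) (X := S) 0 ht0 hint
    rw [mul_zero, Real.exp_zero, one_mul] at hchern
    have hmgfS : mgf S ℙ t ≤ Real.exp (-(N * Δ ^ 2) / 4) := by
      rw [hS, hZindep.mgf_sum hZmeas]
      calc ∏ s : Fin N, mgf (Z s) ℙ t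
          ≤ ∏ _s : Fin N, Real.exp (-(Δ ^ 2) / 4) :=
            Finset.prod_le_prod (fun s _ => mgf_nonneg) (fun s _ => hmgfZ s)
        _ = Real.exp (-(Δ ^ 2) / 4) ^ N := by simp
        _ = Real.exp (N * (-(Δ ^ 2) / 4)) := (Real.exp_nat_mul _ N).symm
        _ = Real.exp (-(N * Δ ^ 2) / 4) := by ring_nf
    have hsetEq : {ω | (0:ℝ) ≤ c j ω - c istar ω} = {ω | (0:ℝ) ≤ S ω} := by
      ext ω; simp [hSapp ω]
    rw [hsetEq]
    have hfin : ℙ {ω | (0:ℝ) ≤ S ω} ≠ ⊤ := measure_ne_top _ _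
    rw [← ENNReal.ofReal_toReal hfin]
    exact ENNReal.ofReal_le_ofReal (hchern.trans hmgfS)
  -- union bound
  set Bad : Set Ω := ⋃ j ∈ Finset.univ.erase istar, {ω | (0:ℝ) ≤ c j ω - c istar ω} with hBad
  have hBadmeas : MeasurableSet Bad := by
    refine MeasurableSet.biUnion (Finset.countable_toSet _) fun j _ => ?_
    exact measurableSet_le measurable_const ((hcmeas j).sub (hcmeas istar))
  have hexp_le : (l:ℝ) * Real.exp (-(N * Δ ^ 2) / 4) ≤ δ := by
    have h1' : Real.exp (-(N * Δ ^ 2) / 4) ≤ Real.exp (-(2 * L)) := by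
      apply Real.exp_le_exp.mpr
      have h4 : 2 * L ≤ (N * Δ ^ 2) / 4 := by linarith
      linarith
    have hexpL : Real.exp (-L) = δ / (4 * l) := by
      rw [hLdef, Real.exp_neg, Real.exp_log hratpos, inv_div]
    have h2' : Real.exp (-(2 * L)) = (δ / (4 * l)) ^ 2 := by
      rw [show -(2*L) = (-L) + (-L) by ring, Real.exp_add, hexpL]
      ring
    have h3' : (l:ℝ) * (δ / (4 * l)) ^ 2 ≤ δ := by
      rw [div_pow, ← mul_div_assoc, div_le_iff₀ (by positivity : (0:ℝ) < ((4:ℝ)*l)^2)]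
      have hkey : 0 ≤ (l:ℝ) * δ * (16 * l - δ) :=
        mul_nonneg (mul_nonneg (by linarith) hδ.le) (by linarith)
      nlinarith [hkey]
    calc (l:ℝ) * Real.exp (-(N * Δ ^ 2) / 4) ≤ (l:ℝ) * (δ / (4*l))^2 := by
          rw [← h2']; exact mul_le_mul_of_nonneg_left h1' (by positivity)
      _ ≤ δ := h3'
  have hBadLe : ℙ Bad ≤ ENNReal.ofReal δ := by
    calc ℙ Bad ≤ ∑ j ∈ Finset.univ.erase istar, ℙ {ω | (0:ℝ) ≤ c j ω - c istar ω} :=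
          measure_biUnion_finset_le _ _
      _ ≤ ∑ _j ∈ Finset.univ.erase istar, ENNReal.ofReal (Real.exp (-(N * Δ ^ 2) / 4)) :=
          Finset.sum_le_sum key
      _ = ((Finset.univ.erase istar).card : ENNReal) * ENNReal.ofReal (Real.exp (-(N * Δ ^ 2) / 4)) := by
          rw [Finset.sum_const, nsmul_eq_mul]
      _ ≤ (l : ENNReal) * ENNReal.ofReal (Real.exp (-(N * Δ ^ 2) / 4)) := by
          gcongr
          exact_mod_cast (Finset.card_erase_of_mem (Finset.mem_univ istar)).le.trans
            (by simp [Finset.card_univ])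
      _ = ENNReal.ofReal ((l:ℝ) * Real.exp (-(N * Δ ^ 2) / 4)) := by
          rw [ENNReal.ofReal_mul (by positivity), ENNReal.ofReal_natCast]
      _ ≤ ENNReal.ofReal δ := ENNReal.ofReal_le_ofReal hexp_le
  have hGeq : {ω | ∀ j : Fin l, j ≠ istar →
        ((Finset.univ.filter fun s : Fin N => x s ω = j).card : ℝ) <
          ((Finset.univ.filter fun s : Fin N => x s ω = istar).card : ℝ)} = Badᶜ := by
    ext ω
    simp only [hBad, Set.mem_compl_iff, Set.mem_iUnion, Set.mem_setOf_eq, not_exists,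
      Finset.mem_erase, Finset.mem_univ, and_true, hc]
    constructor
    · intro h j hj
      have := h j hj
      intro h0
      linarith [sub_nonneg.mp h0]
    · intro h j hj
      have := h j hj
      by_contra hcon
      push_neg at hcon
      exact this (by linarith)
  rw [hGeq, prob_compl_eq_one_sub hBadmeas]
  calc ENNReal.ofReal (1 - δ) ≤ 1 - ENNReal.ofReal δ := by
        refine ENNReal.le_sub_of_add_le_right (by simp) ?_
        rw [← ENNReal.ofReal_add (by linarith) hδ.le]
        simp
    _ ≤ 1 - ℙ Bad := tsub_le_tsub_left hBadLe 1
end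

section
/- (Bretagnolle–Huber–Carol inequality.) Let x_1, …, x_N be i.i.d. random variables taking values in {1, …, l} with P(x_s = i) = p_i, and let N_i be the empirical count of outcome i. Then for every λ > 0, P( Σ_{i=1}^{l} | N_i / N − p_i | ≥ λ ) ≤ 2^l · exp( − N·λ² / 2 ). -/
open MeasureTheory ProbabilityTheory

open Real Finset in
lemma hoeffding_bernoulli {q t : ℝ} (hq0 : 0 ≤ q) (hq1 : q ≤ 1) (ht : 0 ≤ t) :
    1 - q + q * Real.exp t ≤ Real.exp (t * q + t ^ 2 / 8) := by
  set h : ℝ → ℝ := fun s => 1 - q + q * Real.exp s with hh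
  have hpos : ∀ s, 0 < h s := by
    intro s
    have := exp_pos s
    rcases eq_or_lt_of_le hq0 with h0 | h0
    · simp [hh, ← h0]
    · have : 0 < q * Real.exp s := mul_pos h0 (exp_pos s)
      simp only [hh]; nlinarith
  have hh' : ∀ s, HasDerivAt h (q * Real.exp s) s := by
    intro s
    exact ((Real.hasDerivAt_exp s).const_mul q).const_add (1 - q)
  have hhcont : Continuous h := by
    simp only [hh]; exact continuous_const.add (continuous_const.mul continuous_exp)
  set u : ℝ → ℝ := fun s => q * Real.exp s / h s with hu
  have hucont : Continuous u :=
    (continuous_const.mul continuous_exp).div hhcont (fun s => (hpos s).ne')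
  have hu' : ∀ s, HasDerivAt u (u s * (1 - u s)) s := by
    intro s
    have h2 := ((Real.hasDerivAt_exp s).const_mul q).div (hh' s) (hpos s).ne'
    have h3 : u s * (1 - u s) =
        (q * Real.exp s * h s - q * Real.exp s * (q * Real.exp s)) / h s ^ 2 := by
      have hne2 : (1 - q + q * Real.exp s) ≠ 0 := (hpos s).ne'
      show q * Real.exp s / (1 - q + q * Real.exp s) *
          (1 - q * Real.exp s / (1 - q + q * Real.exp s)) =
        (q * Real.exp s * (1 - q + q * Real.exp s) - q * Real.exp s * (q * Real.exp s)) /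
          (1 - q + q * Real.exp s) ^ 2
      field_simp
    rw [h3]; exact h2
  have hu01 : ∀ s, 0 ≤ u s ∧ u s ≤ 1 := by
    intro s
    constructor
    · exact div_nonneg (mul_nonneg hq0 (exp_pos s).le) (hpos s).le
    · rw [hu, div_le_one (hpos s)]
      simp only [hh]; nlinarith [exp_pos s]
  have hubd : ∀ s, u s * (1 - u s) ≤ 1 / 4 := by
    intro s; obtain ⟨a, b⟩ := hu01 s; nlinarith [sq_nonneg (u s - 1/2)]
  set g : ℝ → ℝ := fun s => Real.log (h s) - q * s with hg
  have hg' : ∀ s, HasDerivAt g (u s - q) s := by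
    intro s
    have := ((hh' s).log (hpos s).ne').sub ((hasDerivAt_id s).const_mul q)
    exact (this : HasDerivAt g _ s).congr_deriv (by simp [hu])
  have hu0 : u 0 = q := by simp [hu, hh]
  have hgd : ∀ s ∈ Set.Icc (0:ℝ) t, u s - q ≤ s / 4 := by
    intro s hs
    rcases eq_or_lt_of_le hs.1 with h0 | h0
    · simp [← h0, hu0]
    · obtain ⟨c, hc, hceq⟩ := exists_hasDerivAt_eq_slope u
        (fun s => u s * (1 - u s)) h0
        hucont.continuousOn (fun y _ => hu' y)
      rw [hu0] at hceq
      have hb := hubd c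
      rw [hceq, sub_zero, div_le_iff₀ h0] at hb
      linarith
  have hint : ∫ s in (0:ℝ)..t, (u s - q) = g t - g 0 := by
    apply intervalIntegral.integral_eq_sub_of_hasDerivAt
    · intro s _; exact hg' s
    · exact ((hucont.sub continuous_const)).intervalIntegrable 0 t
  have hmono : ∫ s in (0:ℝ)..t, (u s - q) ≤ ∫ s in (0:ℝ)..t, s / 4 := by
    apply intervalIntegral.integral_mono_on ht
    · exact ((hucont.sub continuous_const)).intervalIntegrable 0 t
    · exact (continuous_id.div_const 4).intervalIntegrable 0 t
    · exact hgd
  have hval : ∫ s in (0:ℝ)..t, s / 4 = t ^ 2 / 8 := by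
    simp [intervalIntegral.integral_div, integral_id]
    ring
  have hg0 : g 0 = 0 := by simp [hg, hh]
  have hgt : g t ≤ t ^ 2 / 8 := by
    rw [hint, hval, hg0, sub_zero] at hmono; exact hmono
  have : Real.log (h t) ≤ t * q + t ^ 2 / 8 := by
    simp only [hg] at hgt; linarith
  calc h t = Real.exp (Real.log (h t)) := (Real.exp_log (hpos t)).symm
    _ ≤ Real.exp (t * q + t ^ 2 / 8) := Real.exp_le_exp.mpr this

open Finset in
lemma chernoff_subset
    {Ω : Type*} [MeasureSpace Ω] [IsProbabilityMeasure (ℙ : Measure Ω)]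
    (l N : ℕ) (hN : 0 < N)
    (p : Fin l → ℝ) (hp0 : ∀ i, 0 ≤ p i) (hpsum : ∑ i, p i = 1)
    (x : Fin N → Ω → Fin l) (hmeas : ∀ s, Measurable (x s))
    (hindep : iIndepFun x ℙ)
    (hdist : ∀ s i, ℙ {ω | x s ω = i} = ENNReal.ofReal (p i))
    (A : Finset (Fin l)) (lam : ℝ) (hlam : 0 < lam) :
    ℙ {ω | (N : ℝ) * ((∑ i ∈ A, p i) + lam / 2) ≤
        ((Finset.univ.filter fun s : Fin N => x s ω ∈ A).card : ℝ)} ≤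
      ENNReal.ofReal (Real.exp (-(N : ℝ) * lam ^ 2 / 2)) := by
  classical
  set q : ℝ := ∑ i ∈ A, p i with hq
  have hq0 : 0 ≤ q := Finset.sum_nonneg fun i _ => hp0 i
  have hq1 : q ≤ 1 := hpsum ▸ Finset.sum_le_sum_of_subset_of_nonneg A.subset_univ
    (fun i _ _ => hp0 i)
  set f : Fin l → ℝ := fun i => if i ∈ A then 1 else 0 with hf
  have hfmeas : Measurable f := measurable_of_countable f
  set Y : Fin N → Ω → ℝ := fun s => f ∘ x s with hY
  have hYmeas : ∀ s, Measurable (Y s) := fun s => hfmeas.comp (hmeas s)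
  have hYindep : iIndepFun Y ℙ :=
    hindep.comp (fun _ => f) (fun _ => hfmeas)
  set t : ℝ := 2 * lam with htdef
  have ht : 0 ≤ t := by positivity
  -- the preimage sets
  have hSmeas : ∀ s, MeasurableSet ((x s) ⁻¹' {i | i ∈ A}) :=
    fun s => (hmeas s) ((Set.to_countable _).measurableSet)
  have hPA : ∀ s, ℙ ((x s) ⁻¹' {i | i ∈ A}) = ENNReal.ofReal q := by
    intro s
    have hd : (A : Set (Fin l)).PairwiseDisjoint (fun i => {ω | x s ω = i}) := by
      intro i _ j _ hij
      simp only [Function.onFun, Set.disjoint_left]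
      intro ω hi hj
      exact hij (by simp at hi hj; rw [← hi, hj])
    have hm : ∀ i ∈ A, MeasurableSet {ω | x s ω = i} :=
      fun i _ => (hmeas s) (measurableSet_singleton i)
    have hu := measure_biUnion_finset (μ := ℙ) hd hm
    have hset : (x s) ⁻¹' {i | i ∈ A} = ⋃ i ∈ A, {ω | x s ω = i} := by
      ext ω; simp
    rw [hset, hu, Finset.sum_congr rfl (fun i _ => hdist s i),
      ← ENNReal.ofReal_sum_of_nonneg (fun i _ => hp0 i)]
  -- pointwise expression of exp (t * Y s)
  have hexpY : ∀ s, (fun ω => Real.exp (t * Y s ω)) =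
      fun ω => Set.indicator ((x s) ⁻¹' {i | i ∈ A}) (fun _ => Real.exp t - 1) ω + 1 := by
    intro s
    funext ω
    by_cases hmem : x s ω ∈ A <;>
      simp [hY, hf, hmem, Set.indicator_apply, Set.mem_preimage]
  have hintY : ∀ s, Integrable (fun ω => Real.exp (t * Y s ω)) ℙ := by
    intro s
    rw [hexpY s]
    exact (((integrable_const (Real.exp t - 1)).indicator (hSmeas s)).add (integrable_const 1))
  have hmgfY : ∀ s, mgf (Y s) ℙ t = 1 - q + q * Real.exp t := by
    intro s
    rw [mgf, hexpY s, integral_add ((integrable_const _).indicator (hSmeas s)) (integrable_const 1),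
      integral_indicator_const _ (hSmeas s), integral_const, measureReal_def, hPA s]
    simp [ENNReal.toReal_ofReal hq0]
    ring
  -- the sum
  set X : Ω → ℝ := fun ω => ∑ s, Y s ω with hX
  have hXeq : X = ∑ s, Y s := by
    funext ω; rw [Finset.sum_apply]
  have hXmeas : Measurable X :=
    Finset.measurable_sum _ (fun s _ => hYmeas s)
  have hXapp : ∀ ω, X ω = ((Finset.univ.filter fun s : Fin N => x s ω ∈ A).card : ℝ) := by
    intro ω
    simp only [hX, hY, hf, Function.comp]
    rw [Finset.sum_boole]
  have hXbd : ∀ ω, X ω ≤ N := by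
    intro ω
    rw [hXapp ω]
    have h1 : (Finset.univ.filter fun s : Fin N => x s ω ∈ A).card ≤ N := by
      simpa using Finset.card_filter_le Finset.univ (fun s : Fin N => x s ω ∈ A)
    exact_mod_cast h1
  have hintX : Integrable (fun ω => Real.exp (t * X ω)) ℙ := by
    refine (integrable_const (Real.exp (t * N))).mono'
      ((hXmeas.const_mul t).exp.aestronglyMeasurable) ?_
    filter_upwards with ω
    rw [Real.norm_eq_abs, abs_of_pos (Real.exp_pos _), Real.exp_le_exp]
    exact mul_le_mul_of_nonneg_left (hXbd ω) ht
  have hmgfX : mgf X ℙ t = (1 - q + q * Real.exp t) ^ N := by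
    rw [hXeq, hYindep.mgf_sum hYmeas]
    rw [Finset.prod_congr rfl (fun s _ => hmgfY s), Finset.prod_const, Finset.card_univ,
      Fintype.card_fin]
  have hcher := measure_ge_le_exp_mul_mgf (μ := ℙ) (X := X) ((N : ℝ) * (q + lam / 2)) ht hintX
  rw [hmgfX] at hcher
  have hbase : 0 ≤ 1 - q + q * Real.exp t := by nlinarith [Real.exp_pos t]
  have hstep : Real.exp (-t * ((N : ℝ) * (q + lam / 2))) * (1 - q + q * Real.exp t) ^ N ≤
      Real.exp (-(N : ℝ) * lam ^ 2 / 2) := by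
    have h1 : (1 - q + q * Real.exp t) ^ N ≤ Real.exp (t * q + t ^ 2 / 8) ^ N :=
      pow_le_pow_left₀ hbase (hoeffding_bernoulli hq0 hq1 ht) N
    calc Real.exp (-t * ((N : ℝ) * (q + lam / 2))) * (1 - q + q * Real.exp t) ^ N
        ≤ Real.exp (-t * ((N : ℝ) * (q + lam / 2))) * Real.exp (t * q + t ^ 2 / 8) ^ N := by
          exact mul_le_mul_of_nonneg_left h1 (Real.exp_pos _).le
      _ = Real.exp (-t * ((N : ℝ) * (q + lam / 2)) + N * (t * q + t ^ 2 / 8)) := by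
          rw [← Real.exp_nat_mul, ← Real.exp_add]
      _ = Real.exp (-(N : ℝ) * lam ^ 2 / 2) := by
          congr 1
          rw [htdef]; ring
  have hfin : (ℙ {ω | (N : ℝ) * (q + lam / 2) ≤ X ω}).toReal ≤
      Real.exp (-(N : ℝ) * lam ^ 2 / 2) := hcher.trans hstep
  have hsets : {ω | (N : ℝ) * ((∑ i ∈ A, p i) + lam / 2) ≤
      ((Finset.univ.filter fun s : Fin N => x s ω ∈ A).card : ℝ)} =
      {ω | (N : ℝ) * (q + lam / 2) ≤ X ω} := by
    ext ω; simp [hXapp ω, hq]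
  rw [hsets, ← ENNReal.ofReal_toReal (measure_ne_top ℙ _)]
  exact ENNReal.ofReal_le_ofReal hfin

/-- Bretagnolle–Huber–Carol inequality: for i.i.d. samples `x 1, …, x N` from a
multinomial distribution on `{1, …, l}` with probabilities `p i`, and empirical
counts `N_i`, for every `λ > 0`,
`P(Σ_i |N_i/N − p_i| ≥ λ) ≤ 2^l · exp(−N·λ²/2)`. -/
theorem bretagnolle_huber_carol
    {Ω : Type*} [MeasureSpace Ω] [IsProbabilityMeasure (ℙ : Measure Ω)]
    (l N : ℕ) (hl : 0 < l) (hN : 0 < N)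
    (p : Fin l → ℝ) (hp0 : ∀ i, 0 ≤ p i) (hpsum : ∑ i, p i = 1)
    (x : Fin N → Ω → Fin l) (hmeas : ∀ s, Measurable (x s))
    (hindep : iIndepFun x ℙ)
    (hdist : ∀ s i, ℙ {ω | x s ω = i} = ENNReal.ofReal (p i))
    (lam : ℝ) (hlam : 0 < lam) :
    ℙ {ω | lam ≤ ∑ i : Fin l,
        |((Finset.univ.filter fun s : Fin N => x s ω = i).card : ℝ) / N - p i|} ≤
      ENNReal.ofReal (2 ^ l * Real.exp (-(N : ℝ) * lam ^ 2 / 2)) := by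
  classical
  have hNR : (0 : ℝ) < N := by exact_mod_cast hN
  set a : Ω → Fin l → ℝ :=
    fun ω i => ((Finset.univ.filter fun s : Fin N => x s ω = i).card : ℝ) / N - p i with ha
  -- counting identities
  have hcount : ∀ ω (A : Finset (Fin l)),
      ∑ i ∈ A, ((Finset.univ.filter fun s : Fin N => x s ω = i).card : ℕ) =
        (Finset.univ.filter fun s : Fin N => x s ω ∈ A).card := by
    intro ω A
    rw [Finset.card_eq_sum_card_fiberwise
      (f := fun s => x s ω) (s := Finset.univ.filter fun s => x s ω ∈ A) (t := A) (fun s hs => (Finset.mem_filter.mp hs).2)]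
    refine Finset.sum_congr rfl fun i hi => ?_
    congr 1
    rw [Finset.filter_filter]
    apply Finset.filter_congr
    intro s _
    constructor
    · exact fun h => ⟨by rw [h]; exact hi, h⟩
    · exact fun h => h.2
  have hsum0 : ∀ ω, ∑ i, a ω i = 0 := by
    intro ω
    have h1 : ∑ i : Fin l, ((Finset.univ.filter fun s : Fin N => x s ω = i).card : ℕ) = N := by
      rw [hcount ω Finset.univ]
      simp
    simp only [ha, Finset.sum_sub_distrib, hpsum]
    rw [← Finset.sum_div]
    rw [show ∑ i : Fin l, ((Finset.univ.filter fun s : Fin N => x s ω = i).card : ℝ)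
        = (N : ℝ) by exact_mod_cast congrArg (Nat.cast (R := ℝ)) h1]
    field_simp
    norm_num
  -- inclusion into union of events
  have hsubset : {ω | lam ≤ ∑ i : Fin l,
        |((Finset.univ.filter fun s : Fin N => x s ω = i).card : ℝ) / N - p i|} ⊆
      ⋃ A : Finset (Fin l), {ω | (N : ℝ) * ((∑ i ∈ A, p i) + lam / 2) ≤
        ((Finset.univ.filter fun s : Fin N => x s ω ∈ A).card : ℝ)} := by
    intro ω hω
    simp only [Set.mem_setOf_eq] at hω
    set A : Finset (Fin l) := Finset.univ.filter fun i => 0 ≤ a ω i with hA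
    have habs : ∑ i : Fin l, |a ω i| = 2 * ∑ i ∈ A, a ω i := by
      rw [← Finset.sum_filter_add_sum_filter_not Finset.univ (fun i => 0 ≤ a ω i)
        (fun i => |a ω i|)]
      have h2 : ∑ i ∈ A, a ω i + ∑ i ∈ Finset.univ.filter (fun i => ¬ 0 ≤ a ω i), a ω i
          = 0 := by
        rw [Finset.sum_filter_add_sum_filter_not]; exact hsum0 ω
      rw [Finset.sum_congr rfl (fun i hi => abs_of_nonneg (Finset.mem_filter.mp hi).2),
        Finset.sum_congr rfl
          (fun i hi => abs_of_neg (lt_of_not_ge (Finset.mem_filter.mp hi).2)),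
        Finset.sum_neg_distrib]
      linarith
    have hA2 : lam / 2 ≤ ∑ i ∈ A, a ω i := by
      rw [ha] at habs ⊢
      linarith [hω, habs]
    have hsumA : ∑ i ∈ A, a ω i =
        ((Finset.univ.filter fun s : Fin N => x s ω ∈ A).card : ℝ) / N - ∑ i ∈ A, p i := by
      simp only [ha, Finset.sum_sub_distrib]
      rw [← Finset.sum_div]
      congr 2
      exact_mod_cast congrArg (Nat.cast (R := ℝ)) (hcount ω A)
    rw [Set.mem_iUnion]
    refine ⟨A, ?_⟩
    simp only [Set.mem_setOf_eq]
    rw [hsumA] at hA2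
    rw [mul_comm, ← le_div_iff₀ hNR]
    linarith
  calc ℙ {ω | lam ≤ ∑ i : Fin l,
        |((Finset.univ.filter fun s : Fin N => x s ω = i).card : ℝ) / N - p i|}
      ≤ ℙ (⋃ A : Finset (Fin l), {ω | (N : ℝ) * ((∑ i ∈ A, p i) + lam / 2) ≤
        ((Finset.univ.filter fun s : Fin N => x s ω ∈ A).card : ℝ)}) := measure_mono hsubset
    _ ≤ ∑' A : Finset (Fin l), ℙ {ω | (N : ℝ) * ((∑ i ∈ A, p i) + lam / 2) ≤
        ((Finset.univ.filter fun s : Fin N => x s ω ∈ A).card : ℝ)} := measure_iUnion_le _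
    _ ≤ ∑' A : Finset (Fin l), ENNReal.ofReal (Real.exp (-(N : ℝ) * lam ^ 2 / 2)) :=
        ENNReal.tsum_le_tsum fun A =>
          chernoff_subset l N hN p hp0 hpsum x hmeas hindep hdist A lam hlam
    _ = (2 ^ l : ℕ) * ENNReal.ofReal (Real.exp (-(N : ℝ) * lam ^ 2 / 2)) := by
        rw [tsum_fintype, Finset.sum_const, Finset.card_univ, Fintype.card_finset,
          Fintype.card_fin, nsmul_eq_mul]
    _ = ENNReal.ofReal (2 ^ l * Real.exp (-(N : ℝ) * lam ^ 2 / 2)) := by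
        rw [ENNReal.ofReal_mul (by positivity)]
        congr 1
        rw [show ((2:ℝ)^l) = ((2^l : ℕ) : ℝ) by push_cast; ring, ENNReal.ofReal_natCast]
end
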